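/- arXiv:1307.5620 — 2 statements merged into one kernel-verified Lean document; each statement's English description precedes it below -/
import Mathlib

section
/- The spaces cs^λ and cs₀^λ are separable with respect to the norm ‖·‖_{bs^λ}: there exists a countable set D ⊆ cs^λ such that for every x ∈ cs^λ and every ε > 0 there is d ∈ D with ‖x − d‖_{bs^λ} < ε, and likewise for cs₀^λ. -/
open Filter Topology

/-- `dl l k = λ_k - λ_{k-1}` with the convention `λ_{-1} = 0`. -/
noncomputable def dl (l : ℕ → ℝ) (k : ℕ) : ℝ := l k - (if k = 0 then 0 else l (k - 1))

/-- `LamT l x n = Λ_n(x) = (1/λ_n) ∑_{k=0}^n (λ_k - λ_{k-1}) x_k`. -/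
noncomputable def LamT (l : ℕ → ℝ) (x : ℕ → ℂ) (n : ℕ) : ℂ :=
  (1 / (l n : ℂ)) * ∑ k ∈ Finset.range (n + 1), ((dl l k : ℝ) : ℂ) * x k

/-- `cs^λ`: the partial sums `∑_{n=0}^m Λ_n(x)` converge. -/
def csLam (l : ℕ → ℝ) : Set (ℕ → ℂ) :=
  {x | ∃ L, Tendsto (fun m => ∑ n ∈ Finset.range (m + 1), LamT l x n) atTop (𝓝 L)}

/-- `cs₀^λ`: the partial sums `∑_{n=0}^m Λ_n(x)` tend to `0`. -/
def cs0Lam (l : ℕ → ℝ) : Set (ℕ → ℂ) :=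
  {x | Tendsto (fun m => ∑ n ∈ Finset.range (m + 1), LamT l x n) atTop (𝓝 0)}

/-- `bs^λ`: the partial sums `∑_{n=0}^m Λ_n(x)` are bounded. -/
def bsLam (l : ℕ → ℝ) : Set (ℕ → ℂ) :=
  {x | ∃ C, ∀ m, ‖∑ n ∈ Finset.range (m + 1), LamT l x n‖ ≤ C}

/-- The norm `‖x‖_{bs^λ} = sup_m |∑_{n=0}^m Λ_n(x)|`. -/
noncomputable def bsLamNorm (l : ℕ → ℝ) (x : ℕ → ℂ) : ℝ :=
  ⨆ m, ‖∑ n ∈ Finset.range (m + 1), LamT l x n‖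

-- auxiliary
def preY (y : ℕ → ℂ) (n : ℕ) : ℂ := if n = 0 then 0 else y (n - 1)

noncomputable def seqOf (l : ℕ → ℝ) (y : ℕ → ℂ) (n : ℕ) : ℂ :=
  ((l n : ℂ) * (y n - preY y n) -
    (if n = 0 then 0 else (l (n-1) : ℂ) * (y (n-1) - preY y (n-1)))) / ((dl l n : ℝ) : ℂ)

lemma l_pos (l : ℕ → ℝ) (hmono : StrictMono l) (hpos : 0 < l 0) (n : ℕ) : 0 < l n :=
  lt_of_lt_of_le hpos (hmono.monotone (Nat.zero_le n))

lemma dl_pos (l : ℕ → ℝ) (hmono : StrictMono l) (hpos : 0 < l 0) (n : ℕ) : 0 < dl l n := by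
  unfold dl
  rcases Nat.eq_zero_or_pos n with h | h
  · simp [h, hpos]
  · rw [if_neg h.ne', sub_pos]
    exact hmono (Nat.sub_lt h one_pos)

lemma sum_seqOf (l : ℕ → ℝ) (hmono : StrictMono l) (hpos : 0 < l 0) (y : ℕ → ℂ) (n : ℕ) :
    ∑ k ∈ Finset.range (n + 1), ((dl l k : ℝ) : ℂ) * seqOf l y k
      = (l n : ℂ) * (y n - preY y n) := by
  induction n with
  | zero =>
    have h0 : ((dl l 0 : ℝ) : ℂ) ≠ 0 := by
      exact_mod_cast (dl_pos l hmono hpos 0).ne'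
    simp only [zero_add, Finset.sum_range_one, seqOf, if_pos rfl, if_true, sub_zero]
    field_simp
  | succ m ih =>
    have h0 : ((dl l (m+1) : ℝ) : ℂ) ≠ 0 := by
      exact_mod_cast (dl_pos l hmono hpos (m+1)).ne'
    rw [Finset.sum_range_succ, ih, seqOf]
    rw [if_neg (Nat.succ_ne_zero m)]
    simp only [Nat.add_sub_cancel]
    field_simp
    ring

lemma LamT_seqOf (l : ℕ → ℝ) (hmono : StrictMono l) (hpos : 0 < l 0) (y : ℕ → ℂ) (n : ℕ) :
    LamT l (seqOf l y) n = y n - preY y n := by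
  have hl : ((l n : ℝ) : ℂ) ≠ 0 := by exact_mod_cast (l_pos l hmono hpos n).ne'
  rw [LamT, sum_seqOf l hmono hpos]
  field_simp

lemma S_seqOf (l : ℕ → ℝ) (hmono : StrictMono l) (hpos : 0 < l 0) (y : ℕ → ℂ) (m : ℕ) :
    ∑ n ∈ Finset.range (m + 1), LamT l (seqOf l y) n = y m := by
  have : ∀ n, LamT l (seqOf l y) n = preY y (n+1) - preY y n := by
    intro n
    rw [LamT_seqOf l hmono hpos]
    simp [preY]
  simp only [this]
  rw [Finset.sum_range_sub (f := preY y)]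
  simp [preY]

lemma S_sub (l : ℕ → ℝ) (x d : ℕ → ℂ) (m : ℕ) :
    ∑ n ∈ Finset.range (m + 1), LamT l (fun k => x k - d k) n
      = (∑ n ∈ Finset.range (m + 1), LamT l x n) - ∑ n ∈ Finset.range (m + 1), LamT l d n := by
  rw [← Finset.sum_sub_distrib]
  apply Finset.sum_congr rfl
  intro n _
  simp only [LamT, ← mul_sub, ← Finset.sum_sub_distrib]

def toC (q : ℚ × ℚ) : ℂ := ⟨(q.1 : ℝ), (q.2 : ℝ)⟩

lemma toC_near (z : ℂ) {ε : ℝ} (hε : 0 < ε) : ∃ q : ℚ × ℚ, ‖z - toC q‖ < ε := by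
  obtain ⟨q1, hq1⟩ := exists_rat_near z.re (half_pos hε)
  obtain ⟨q2, hq2⟩ := exists_rat_near z.im (half_pos hε)
  refine ⟨(q1, q2), ?_⟩
  calc ‖z - toC (q1, q2)‖ ≤ |(z - toC (q1, q2)).re| + |(z - toC (q1, q2)).im| :=
        Complex.norm_le_abs_re_add_abs_im _
    _ < ε := by
        simp only [Complex.sub_re, Complex.sub_im, toC]
        calc |z.re - (q1:ℝ)| + |z.im - (q2:ℝ)| < ε/2 + ε/2 := add_lt_add hq1 hq2
          _ = ε := add_halves ε


theorem stmt11 (l : ℕ → ℝ) (hmono : StrictMono l) (hpos : 0 < l 0)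
    (hlim : Tendsto l atTop atTop) :
    (∃ D : Set (ℕ → ℂ), D.Countable ∧ D ⊆ csLam l ∧
      ∀ x ∈ csLam l, ∀ ε > (0 : ℝ), ∃ d ∈ D, bsLamNorm l (fun k => x k - d k) < ε) ∧
    (∃ D : Set (ℕ → ℂ), D.Countable ∧ D ⊆ cs0Lam l ∧
      ∀ x ∈ cs0Lam l, ∀ ε > (0 : ℝ), ∃ d ∈ D, bsLamNorm l (fun k => x k - d k) < ε) := by
  constructor
  · -- cs^λ
    set gc : ((ℚ × ℚ) × Σ N : ℕ, Fin N → ℚ × ℚ) → (ℕ → ℂ) :=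
      fun p => seqOf l (fun n => toC p.1 + if h : n < p.2.1 then toC (p.2.2 ⟨n, h⟩) else 0)
        with hgc
    refine ⟨Set.range gc, Set.countable_range _, ?_, ?_⟩
    · rintro d ⟨p, rfl⟩
      refine ⟨toC p.1, ?_⟩
      have heq : (fun m => ∑ n ∈ Finset.range (m + 1), LamT l (gc p) n)
          = fun m => toC p.1 + if h : m < p.2.1 then toC (p.2.2 ⟨m, h⟩) else 0 :=
        funext fun m => S_seqOf l hmono hpos _ m
      rw [heq]
      apply tendsto_const_nhds.congr'
      filter_upwards [eventually_ge_atTop p.2.1] with m hm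
      rw [dif_neg (not_lt.mpr hm), add_zero]
    · intro x hx ε hε
      obtain ⟨L0, hx⟩ := hx
      obtain ⟨N, hN⟩ := Metric.tendsto_atTop.mp hx (ε/4) (by linarith)
      obtain ⟨q, hq⟩ := toC_near L0 (show (0:ℝ) < ε/4 by linarith)
      choose f hf using fun m : Fin N =>
        toC_near ((∑ n ∈ Finset.range ((m:ℕ) + 1), LamT l x n) - toC q)
          (show (0:ℝ) < ε/2 by linarith)
      refine ⟨gc (q, ⟨N, f⟩), ⟨_, rfl⟩, ?_⟩
      have key : ∀ m, ‖∑ n ∈ Finset.range (m + 1), LamT l (fun k => x k - gc (q, ⟨N, f⟩) k) n‖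
          ≤ ε/2 := by
        intro m
        rw [S_sub, S_seqOf l hmono hpos]
        by_cases hm : m < N
        · rw [dif_pos hm]
          have := hf ⟨m, hm⟩
          calc ‖(∑ n ∈ Finset.range (m + 1), LamT l x n) - (toC q + toC (f ⟨m, hm⟩))‖
              = ‖((∑ n ∈ Finset.range (m + 1), LamT l x n) - toC q) - toC (f ⟨m, hm⟩)‖ := by
                ring_nf
            _ ≤ ε/2 := le_of_lt this
        · rw [dif_neg hm, add_zero]
          have h1 := hN m (le_of_not_gt hm)
          rw [dist_eq_norm] at h1
          calc ‖(∑ n ∈ Finset.range (m + 1), LamT l x n) - toC q‖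
              ≤ ‖(∑ n ∈ Finset.range (m + 1), LamT l x n) - L0‖ + ‖L0 - toC q‖ := by
                have : (∑ n ∈ Finset.range (m + 1), LamT l x n) - toC q
                    = ((∑ n ∈ Finset.range (m + 1), LamT l x n) - L0) + (L0 - toC q) := by ring
                rw [this]; exact norm_add_le _ _
            _ ≤ ε/4 + ε/4 := add_le_add h1.le hq.le
            _ = ε/2 := by ring
      calc bsLamNorm l (fun k => x k - gc (q, ⟨N, f⟩) k) ≤ ε/2 := ciSup_le key
        _ < ε := by linarith
  · -- cs₀^λ
    set g0 : (Σ N : ℕ, Fin N → ℚ × ℚ) → (ℕ → ℂ) :=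
      fun p => seqOf l (fun n => if h : n < p.1 then toC (p.2 ⟨n, h⟩) else 0) with hg0
    refine ⟨Set.range g0, Set.countable_range _, ?_, ?_⟩
    · rintro d ⟨p, rfl⟩
      show Tendsto _ atTop (𝓝 0)
      have heq : (fun m => ∑ n ∈ Finset.range (m + 1), LamT l (g0 p) n)
          = fun m => if h : m < p.1 then toC (p.2 ⟨m, h⟩) else 0 :=
        funext fun m => S_seqOf l hmono hpos _ m
      rw [heq]
      apply tendsto_const_nhds.congr'
      filter_upwards [eventually_ge_atTop p.1] with m hm
      rw [dif_neg (not_lt.mpr hm)]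
    · intro x hx ε hε
      obtain ⟨N, hN⟩ := Metric.tendsto_atTop.mp hx (ε/2) (by linarith)
      choose f hf using fun m : Fin N =>
        toC_near (∑ n ∈ Finset.range ((m:ℕ) + 1), LamT l x n)
          (show (0:ℝ) < ε/2 by linarith)
      refine ⟨g0 ⟨N, f⟩, ⟨_, rfl⟩, ?_⟩
      have key : ∀ m, ‖∑ n ∈ Finset.range (m + 1), LamT l (fun k => x k - g0 ⟨N, f⟩ k) n‖
          ≤ ε/2 := by
        intro m
        rw [S_sub, S_seqOf l hmono hpos]
        by_cases hm : m < N
        · rw [dif_pos hm]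
          exact (hf ⟨m, hm⟩).le
        · rw [dif_neg hm, sub_zero]
          have h1 := hN m (le_of_not_gt hm)
          rw [dist_eq_norm, sub_zero] at h1
          exact h1.le
      calc bsLamNorm l (fun k => x k - g0 ⟨N, f⟩ k) ≤ ε/2 := ciSup_le key
        _ < ε := by linarith
end

section
/- A sequence a : ℕ → ℂ belongs to the α-dual of cs₀^λ, and equivalently to the α-dual of bs^λ (i.e. ∑_k |a_k·x_k| < ∞ for every x in the respective space), if and only if sup over all finite sets N, K ⊆ ℕ of |∑_{n∈N} ∑_{k∈K} (b_{nk} − b_{n,k+1})| is finite, where b_{nk} = (−1)^{n−k}·λ_k/(λ_n − λ_{n−1})·a_n if n−1 ≤ k ≤ n and b_{nk} = 0 otherwise. -/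
open Filter Topology

/-- The matrix `B^λ = (b_{nk})` associated with the sequence `a`:
`b_{nk} = (-1)^{n-k} λ_k/(λ_n - λ_{n-1}) a_n` if `n-1 ≤ k ≤ n`, and `0` otherwise. -/
noncomputable def Bmat (l : ℕ → ℝ) (a : ℕ → ℂ) (n k : ℕ) : ℂ :=
  if n ≤ k + 1 ∧ k ≤ n then (-1 : ℂ) ^ (n - k) * (l k : ℂ) / ((dl l n : ℝ) : ℂ) * a n else 0

/-- difference sequence with convention `s_{-1} = 0`. -/
def DD (s : ℕ → ℂ) (n : ℕ) : ℂ := s n - (if n = 0 then 0 else s (n - 1))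

noncomputable def mkX (l : ℕ → ℝ) (s : ℕ → ℂ) (n : ℕ) : ℂ :=
  ((l n : ℂ) * DD s n - (if n = 0 then 0 else (l (n - 1) : ℂ) * DD s (n - 1))) /
    ((dl l n : ℝ) : ℂ)

section

variable {l : ℕ → ℝ} (hmono : StrictMono l) (hpos : 0 < l 0)

include hmono hpos

theorem lpos (n : ℕ) : 0 < l n := hpos.trans_le (hmono.monotone n.zero_le)

theorem dlpos (n : ℕ) : 0 < dl l n := by
  unfold dl
  split
  · simpa [*] using hpos
  · have h : n - 1 < n := Nat.sub_lt (Nat.pos_of_ne_zero ‹_›) one_pos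
    simpa using sub_pos.2 (hmono h)

theorem l_ne (n : ℕ) : ((l n : ℝ) : ℂ) ≠ 0 := by
  exact_mod_cast Complex.ofReal_ne_zero.2 (lpos hmono hpos n).ne'

theorem dl_ne (n : ℕ) : ((dl l n : ℝ) : ℂ) ≠ 0 :=
  Complex.ofReal_ne_zero.2 (dlpos hmono hpos n).ne'

theorem sum_dl_mkX (s : ℕ → ℂ) (n : ℕ) :
    ∑ k ∈ Finset.range (n + 1), ((dl l k : ℝ) : ℂ) * mkX l s k = (l n : ℂ) * DD s n := by
  induction n with
  | zero =>
      rw [Finset.sum_range_one]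
      show ((dl l 0 : ℝ) : ℂ) * mkX l s 0 = _
      rw [mkX, if_pos rfl, sub_zero, mul_div_cancel₀ _ (dl_ne hmono hpos 0)]
  | succ m ih =>
      rw [Finset.sum_range_succ, ih]
      show _ + ((dl l (m+1) : ℝ) : ℂ) * mkX l s (m+1) = _
      rw [mkX, if_neg (Nat.succ_ne_zero m), Nat.add_sub_cancel,
        mul_div_cancel₀ _ (dl_ne hmono hpos (m + 1))]
      ring

theorem LamT_mkX (s : ℕ → ℂ) (n : ℕ) : LamT l (mkX l s) n = DD s n := by
  rw [LamT, sum_dl_mkX hmono hpos]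
  field_simp [l_ne hmono hpos n]

omit hmono hpos in
theorem sum_DD (s : ℕ → ℂ) (m : ℕ) : ∑ n ∈ Finset.range (m + 1), DD s n = s m := by
  induction m with
  | zero => simp [DD]
  | succ k ih =>
      rw [Finset.sum_range_succ, ih]
      simp [DD]

theorem mul_LamT (x : ℕ → ℂ) (n : ℕ) :
    (l n : ℂ) * LamT l x n = ∑ k ∈ Finset.range (n + 1), ((dl l k : ℝ) : ℂ) * x k := by
  rw [LamT, ← mul_assoc, mul_one_div, div_self (l_ne hmono hpos n), one_mul]

theorem dl_mul_x (x : ℕ → ℂ) (n : ℕ) :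
    ((dl l n : ℝ) : ℂ) * x n =
      (l n : ℂ) * LamT l x n - (if n = 0 then 0 else (l (n - 1) : ℂ) * LamT l x (n - 1)) := by
  cases n with
  | zero =>
      rw [if_pos rfl, sub_zero, mul_LamT hmono hpos, Finset.sum_range_one]
  | succ m =>
      rw [if_neg (Nat.succ_ne_zero m), Nat.add_sub_cancel]
      have h1 := mul_LamT hmono hpos x (m + 1)
      have h2 := mul_LamT hmono hpos x m
      rw [Finset.sum_range_succ] at h1
      linear_combination h2 - h1

end

/-- if all subset sums have norm `≤ C` then the sum of norms is `≤ 4C`. -/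
theorem sum_norm_le_four {z : ℕ → ℂ} {C : ℝ} (T : Finset ℕ)
    (h : ∀ S ⊆ T, ‖∑ n ∈ S, z n‖ ≤ C) : ∑ n ∈ T, ‖z n‖ ≤ 4 * C := by
  have hre : ∀ (S : Finset ℕ), S ⊆ T → |∑ n ∈ S, (z n).re| ≤ C := by
    intro S hS
    calc |∑ n ∈ S, (z n).re| = |(∑ n ∈ S, z n).re| := by rw [Complex.re_sum]
      _ ≤ ‖∑ n ∈ S, z n‖ := Complex.abs_re_le_norm _
      _ ≤ C := h S hS
  have him : ∀ (S : Finset ℕ), S ⊆ T → |∑ n ∈ S, (z n).im| ≤ C := by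
    intro S hS
    calc |∑ n ∈ S, (z n).im| = |(∑ n ∈ S, z n).im| := by rw [Complex.im_sum]
      _ ≤ ‖∑ n ∈ S, z n‖ := Complex.abs_im_le_norm _
      _ ≤ C := h S hS
  have key : ∀ (f : ℕ → ℝ), (∀ (S : Finset ℕ), S ⊆ T → |∑ n ∈ S, f n| ≤ C) →
      ∑ n ∈ T, |f n| ≤ 2 * C := by
    intro f hf
    rw [← Finset.sum_filter_add_sum_filter_not T (fun n => 0 ≤ f n)]
    have h1 : ∑ n ∈ T.filter (fun n => 0 ≤ f n), |f n|
        = ∑ n ∈ T.filter (fun n => 0 ≤ f n), f n := by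
      apply Finset.sum_congr rfl
      intro n hn
      exact abs_of_nonneg (Finset.mem_filter.1 hn).2
    have h2 : ∑ n ∈ T.filter (fun n => ¬ 0 ≤ f n), |f n|
        = -∑ n ∈ T.filter (fun n => ¬ 0 ≤ f n), f n := by
      rw [← Finset.sum_neg_distrib]
      apply Finset.sum_congr rfl
      intro n hn
      exact abs_of_neg (lt_of_not_ge (Finset.mem_filter.1 hn).2)
    rw [h1, h2]
    have b1 := hf _ (Finset.filter_subset (fun n => 0 ≤ f n) T)
    have b2 := hf _ (Finset.filter_subset (fun n => ¬ 0 ≤ f n) T)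
    have := abs_le.1 b1
    have := abs_le.1 b2
    linarith [ (abs_le.1 b1).1, (abs_le.1 b1).2, (abs_le.1 b2).1, (abs_le.1 b2).2]
  have hnorm : ∀ n ∈ T, ‖z n‖ ≤ |(z n).re| + |(z n).im| := by
    intro n _
    exact Complex.norm_le_abs_re_add_abs_im _
  calc ∑ n ∈ T, ‖z n‖ ≤ ∑ n ∈ T, (|(z n).re| + |(z n).im|) := Finset.sum_le_sum hnorm
    _ = ∑ n ∈ T, |(z n).re| + ∑ n ∈ T, |(z n).im| := Finset.sum_add_distrib
    _ ≤ 2 * C + 2 * C := add_le_add (key _ hre) (key _ him)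
    _ = 4 * C := by ring

/-- divergence of `g n / (1 + partial sums below n)` (Abel–Dini type). -/
theorem div_cumsum_not_summable {g : ℕ → ℝ} (hg : ∀ n, 0 ≤ g n) (h : ¬ Summable g) :
    ¬ Summable (fun n => g n / (1 + ∑ j ∈ Finset.range n, g j)) := by
  set W : ℕ → ℝ := fun m => ∑ j ∈ Finset.range m, g j with hW
  have hWnn : ∀ m, 0 ≤ W m := fun m => Finset.sum_nonneg fun j _ => hg j
  have hWpos : ∀ m, (0:ℝ) < 1 + W m := fun m => by linarith [hWnn m]
  have key : ∀ n, Real.log (1 + W (n + 1)) - Real.log (1 + W n) ≤ g n / (1 + W n) := by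
    intro n
    have hlog := Real.log_le_sub_one_of_pos (div_pos (hWpos (n+1)) (hWpos n))
    rw [Real.log_div (hWpos (n+1)).ne' (hWpos n).ne'] at hlog
    have hstep : W (n + 1) = W n + g n := Finset.sum_range_succ g n
    have heq : (1 + W (n+1)) / (1 + W n) - 1 = g n / (1 + W n) := by
      rw [div_sub_one (hWpos n).ne', hstep]
      ring
    rw [heq] at hlog
    simp only [hW] at hlog ⊢
    linarith
  have hps : ∀ m, Real.log (1 + W m) ≤ ∑ n ∈ Finset.range m, g n / (1 + W n) := by
    intro m
    have hs := Finset.sum_le_sum (f := fun n => Real.log (1 + W (n+1)) - Real.log (1 + W n))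
      (g := fun n => g n / (1 + W n)) (s := Finset.range m) (fun n _ => key n)
    rw [Finset.sum_range_sub (fun n => Real.log (1 + W n))] at hs
    simpa [hW] using hs
  intro hsum
  have hnn : ∀ n, 0 ≤ g n / (1 + W n) := fun n => div_nonneg (hg n) (hWpos n).le
  have hWtop : Tendsto W atTop atTop :=
    (not_summable_iff_tendsto_nat_atTop_of_nonneg hg).1 h
  have hlogtop : Tendsto (fun m => Real.log (1 + W m)) atTop atTop :=
    Real.tendsto_log_atTop.comp (tendsto_atTop_add_const_left _ 1 hWtop)
  have htop : Tendsto (fun m => ∑ n ∈ Finset.range m, g n / (1 + W n)) atTop atTop :=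
    tendsto_atTop_mono hps hlogtop
  exact (not_summable_iff_tendsto_nat_atTop_of_nonneg hnn).2 htop hsum

section
variable {l : ℕ → ℝ} (hmono : StrictMono l) (hpos : 0 < l 0)
include hmono hpos

theorem Bmat_norm_le (a : ℕ → ℂ) (n k : ℕ) :
    ‖Bmat l a n k‖ ≤ l n * ‖a n‖ / dl l n := by
  rw [Bmat]
  split
  · rename_i hcond
    rw [norm_mul, norm_div, norm_mul, norm_pow, norm_neg, norm_one, one_pow, one_mul,
      Complex.norm_real, Complex.norm_real, Real.norm_eq_abs, Real.norm_eq_abs,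
      abs_of_pos (lpos hmono hpos k), abs_of_pos (dlpos hmono hpos n)]
    rw [div_mul_eq_mul_div, mul_div_assoc, mul_div_assoc]
    have : l k ≤ l n := hmono.monotone hcond.2
    gcongr
    exact div_nonneg (norm_nonneg _) (dlpos hmono hpos n).le
  · have : (0:ℝ) ≤ l n * ‖a n‖ / dl l n :=
      div_nonneg (mul_nonneg (lpos hmono hpos n).le (norm_nonneg _)) (dlpos hmono hpos n).le
    simpa using this

end

theorem cband (l : ℕ → ℝ) (a : ℕ → ℂ) {n k : ℕ} (h : n + 1 ≤ k ∨ k + 3 ≤ n) :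
    Bmat l a n k - Bmat l a n (k + 1) = 0 := by
  rw [Bmat, Bmat, if_neg (by omega), if_neg (by omega), sub_zero]

theorem cdiag (l : ℕ → ℝ) (a : ℕ → ℂ) (n : ℕ) :
    Bmat l a n n - Bmat l a n (n + 1) = (l n : ℂ) * a n / ((dl l n : ℝ) : ℂ) := by
  rw [Bmat, Bmat, if_pos ⟨Nat.le_succ n, le_refl n⟩, if_neg (by omega), sub_zero,
    Nat.sub_self, pow_zero, one_mul]
  ring

theorem stmt13 (l : ℕ → ℝ) (hmono : StrictMono l) (hpos : 0 < l 0)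
    (hlim : Tendsto l atTop atTop) (a : ℕ → ℂ) :
    ((∀ x ∈ cs0Lam l, Summable fun k => ‖a k * x k‖) ↔
      (∃ C : ℝ, ∀ N K : Finset ℕ,
        ‖∑ n ∈ N, ∑ k ∈ K, (Bmat l a n k - Bmat l a n (k + 1))‖ ≤ C)) ∧
    ((∀ x ∈ bsLam l, Summable fun k => ‖a k * x k‖) ↔
      (∃ C : ℝ, ∀ N K : Finset ℕ,
        ‖∑ n ∈ N, ∑ k ∈ K, (Bmat l a n k - Bmat l a n (k + 1))‖ ≤ C)) := by
  have hdl : ∀ n, 0 < dl l n := dlpos hmono hpos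
  have hl : ∀ n, 0 < l n := lpos hmono hpos
  set w : ℕ → ℝ := fun n => l n * ‖a n‖ / dl l n with hw
  have hwnn : ∀ n, 0 ≤ w n := fun n =>
    div_nonneg (mul_nonneg (hl n).le (norm_nonneg _)) (hdl n).le
  have hdiagnorm : ∀ n, ‖Bmat l a n n - Bmat l a n (n + 1)‖ = w n := by
    intro n
    rw [cdiag, norm_div, norm_mul, Complex.norm_real, Complex.norm_real,
      Real.norm_eq_abs, Real.norm_eq_abs, abs_of_pos (hl n), abs_of_pos (hdl n), hw]
  -- (1) E → RHS
  have h3 : Summable w → ∃ C : ℝ, ∀ N K : Finset ℕ,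
      ‖∑ n ∈ N, ∑ k ∈ K, (Bmat l a n k - Bmat l a n (k + 1))‖ ≤ C := by
    intro hS
    refine ⟨6 * ∑' n, w n, fun N K => ?_⟩
    have hrow : ∀ n, ∑ k ∈ K, ‖Bmat l a n k - Bmat l a n (k + 1)‖ ≤ 6 * w n := by
      intro n
      have hterm : ∀ k ∈ K.filter (fun k => k ≤ n ∧ n ≤ k + 2),
          ‖Bmat l a n k - Bmat l a n (k + 1)‖ ≤ 2 * w n := by
        intro k _
        calc ‖Bmat l a n k - Bmat l a n (k + 1)‖
            ≤ ‖Bmat l a n k‖ + ‖Bmat l a n (k + 1)‖ := norm_sub_le _ _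
          _ ≤ w n + w n := add_le_add (Bmat_norm_le hmono hpos a n k)
              (Bmat_norm_le hmono hpos a n (k + 1))
          _ = 2 * w n := by ring
      have hfilter : ∑ k ∈ K.filter (fun k => k ≤ n ∧ n ≤ k + 2),
          ‖Bmat l a n k - Bmat l a n (k + 1)‖
          = ∑ k ∈ K, ‖Bmat l a n k - Bmat l a n (k + 1)‖ := by
        apply Finset.sum_filter_of_ne
        intro k _ hne
        by_contra hp
        exact hne (by rw [cband l a (by omega)]; simp)
      have hcard : (K.filter (fun k => k ≤ n ∧ n ≤ k + 2)).card ≤ 3 := by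
        have hsub : K.filter (fun k => k ≤ n ∧ n ≤ k + 2) ⊆ Finset.Icc (n - 2) n := by
          intro k hk
          have := (Finset.mem_filter.1 hk).2
          exact Finset.mem_Icc.2 (by omega)
        calc _ ≤ (Finset.Icc (n - 2) n).card := Finset.card_le_card hsub
          _ ≤ 3 := by rw [Nat.card_Icc]; omega
      calc ∑ k ∈ K, ‖Bmat l a n k - Bmat l a n (k + 1)‖
          = ∑ k ∈ K.filter (fun k => k ≤ n ∧ n ≤ k + 2),
            ‖Bmat l a n k - Bmat l a n (k + 1)‖ := hfilter.symm
        _ ≤ (K.filter (fun k => k ≤ n ∧ n ≤ k + 2)).card • (2 * w n) :=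
            Finset.sum_le_card_nsmul _ _ _ hterm
        _ ≤ 3 * (2 * w n) := by
            rw [nsmul_eq_mul]
            have h2 : (0:ℝ) ≤ 2 * w n := by linarith [hwnn n]
            have : ((K.filter (fun k => k ≤ n ∧ n ≤ k + 2)).card : ℝ) ≤ 3 := by
              exact_mod_cast hcard
            nlinarith
        _ = 6 * w n := by ring
    calc ‖∑ n ∈ N, ∑ k ∈ K, (Bmat l a n k - Bmat l a n (k + 1))‖
        ≤ ∑ n ∈ N, ‖∑ k ∈ K, (Bmat l a n k - Bmat l a n (k + 1))‖ := norm_sum_le _ _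
      _ ≤ ∑ n ∈ N, 6 * w n := Finset.sum_le_sum (fun n _ =>
          le_trans (norm_sum_le _ _) (hrow n))
      _ = 6 * ∑ n ∈ N, w n := by rw [Finset.mul_sum]
      _ ≤ 6 * ∑' n, w n := by
          have := Summable.sum_le_tsum N (fun i _ => hwnn i) hS
          linarith
  -- (2) RHS → E
  have h4 : (∃ C : ℝ, ∀ N K : Finset ℕ,
      ‖∑ n ∈ N, ∑ k ∈ K, (Bmat l a n k - Bmat l a n (k + 1))‖ ≤ C) → Summable w := by
    rintro ⟨C, hC⟩
    have hsparse : ∀ (S : Finset ℕ),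
        (∀ i ∈ S, ∀ j ∈ S, i ≠ j → (i + 3 ≤ j ∨ j + 3 ≤ i)) →
        ‖∑ n ∈ S, (Bmat l a n n - Bmat l a n (n + 1))‖ ≤ C := by
      intro S hS
      have h1 := hC S S
      have h2 : ∑ n ∈ S, ∑ k ∈ S, (Bmat l a n k - Bmat l a n (k + 1))
          = ∑ n ∈ S, (Bmat l a n n - Bmat l a n (n + 1)) := by
        apply Finset.sum_congr rfl
        intro n hn
        apply Finset.sum_eq_single_of_mem n hn
        intro k hk hkn
        exact cband l a (by rcases hS k hk n hn hkn with h | h <;> omega)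
      rwa [h2] at h1
    apply summable_of_sum_range_le (c := 12 * C) hwnn
    intro m
    have hres : ∀ r : ℕ, ∑ n ∈ (Finset.range m).filter (fun n => n % 3 = r), w n ≤ 4 * C := by
      intro r
      have := sum_norm_le_four (z := fun n => Bmat l a n n - Bmat l a n (n + 1))
        (C := C) ((Finset.range m).filter (fun n => n % 3 = r)) ?_
      · calc ∑ n ∈ (Finset.range m).filter (fun n => n % 3 = r), w n
            = ∑ n ∈ (Finset.range m).filter (fun n => n % 3 = r),
              ‖Bmat l a n n - Bmat l a n (n + 1)‖ :=
              Finset.sum_congr rfl (fun n _ => (hdiagnorm n).symm)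
          _ ≤ 4 * C := this
      · intro S hSsub
        apply hsparse
        intro i hi j hj hij
        have hi' := (Finset.mem_filter.1 (hSsub hi)).2
        have hj' := (Finset.mem_filter.1 (hSsub hj)).2
        omega
    have hsplit : ∑ n ∈ Finset.range m, w n
        = ∑ r ∈ Finset.range 3, ∑ n ∈ (Finset.range m).filter (fun n => n % 3 = r), w n := by
      rw [Finset.sum_fiberwise_of_maps_to (fun n _ => Finset.mem_range.2 (Nat.mod_lt _ (by omega)))]
    rw [hsplit]
    have : ∑ r ∈ Finset.range 3, ∑ n ∈ (Finset.range m).filter (fun n => n % 3 = r), w n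
        ≤ ∑ r ∈ Finset.range 3, 4 * C := Finset.sum_le_sum (fun r _ => hres r)
    simpa using this.trans (by simp [Finset.sum_const]; ring_nf; norm_num)
  -- (3) E → bs statement
  have h5 : Summable w → ∀ x ∈ bsLam l, Summable fun k => ‖a k * x k‖ := by
    intro hS x hx
    obtain ⟨C, hC⟩ := hx
    have hC0 : 0 ≤ C := le_trans (norm_nonneg _) (hC 0)
    have hD : ∀ n, ‖LamT l x n‖ ≤ 2 * C := by
      intro n
      cases n with
      | zero =>
          have h0 := hC 0
          rw [Finset.sum_range_one] at h0
          linarith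
      | succ m =>
          have h1 := hC (m + 1)
          have h2 := hC m
          have he : LamT l x (m + 1)
              = (∑ n ∈ Finset.range (m + 2), LamT l x n)
                - ∑ n ∈ Finset.range (m + 1), LamT l x n := by
            rw [Finset.sum_range_succ]; ring
          rw [he]
          calc ‖_ - _‖ ≤ ‖∑ n ∈ Finset.range (m + 2), LamT l x n‖
              + ‖∑ n ∈ Finset.range (m + 1), LamT l x n‖ := norm_sub_le _ _
            _ ≤ C + C := add_le_add h1 h2
            _ = 2 * C := by ring
    have hbound : ∀ n, ‖a n * x n‖ ≤ 4 * C * w n := by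
      intro n
      have key : ‖((dl l n : ℝ) : ℂ) * x n‖ ≤ 4 * C * l n := by
        rw [dl_mul_x hmono hpos]
        refine le_trans (norm_sub_le _ _) ?_
        have t1 : ‖(l n : ℂ) * LamT l x n‖ ≤ l n * (2 * C) := by
          rw [norm_mul, Complex.norm_real, Real.norm_eq_abs, abs_of_pos (hl n)]
          exact mul_le_mul_of_nonneg_left (hD n) (hl n).le
        have t2 : ‖(if n = 0 then 0 else (l (n - 1) : ℂ) * LamT l x (n - 1))‖
            ≤ l n * (2 * C) := by
          split
          · rw [norm_zero]; exact mul_nonneg (hl n).le (by linarith)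
          · rw [norm_mul, Complex.norm_real, Real.norm_eq_abs, abs_of_pos (hl _)]
            exact mul_le_mul (hmono.monotone (Nat.sub_le n 1)) (hD _)
              (norm_nonneg _) (hl n).le
        linarith
      have hnorm : ‖((dl l n : ℝ) : ℂ) * x n‖ = dl l n * ‖x n‖ := by
        rw [norm_mul, Complex.norm_real, Real.norm_eq_abs, abs_of_pos (hdl n)]
      rw [hnorm] at key
      have hxn : ‖x n‖ ≤ 4 * C * l n / dl l n := by
        rw [le_div_iff₀ (hdl n)]
        linarith
      calc ‖a n * x n‖ = ‖a n‖ * ‖x n‖ := norm_mul _ _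
        _ ≤ ‖a n‖ * (4 * C * l n / dl l n) :=
            mul_le_mul_of_nonneg_left hxn (norm_nonneg _)
        _ = 4 * C * w n := by rw [hw]; ring
    exact Summable.of_nonneg_of_le (fun n => norm_nonneg _) hbound (hS.mul_left (4 * C))
  -- (4) bs statement → cs0 statement
  have h1 : (∀ x ∈ bsLam l, Summable fun k => ‖a k * x k‖) →
      ∀ x ∈ cs0Lam l, Summable fun k => ‖a k * x k‖ := by
    intro hb x hx
    apply hb
    have hbdd : BddAbove (Set.range fun m => ‖∑ n ∈ Finset.range (m + 1), LamT l x n‖) :=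
      (hx.norm.congr (by simp)).bddAbove_range
    obtain ⟨C, hC⟩ := hbdd
    exact ⟨C, fun m => hC (Set.mem_range_self m)⟩
  -- (5) cs0 statement → E  (gliding hump)
  have h2 : (∀ x ∈ cs0Lam l, Summable fun k => ‖a k * x k‖) → Summable w := by
    intro hP
    by_contra hNS
    have hsplit3 : ∀ n, w n = (if n % 3 = 0 then w n else 0)
        + (if n % 3 = 1 then w n else 0) + (if n % 3 = 2 then w n else 0) := by
      intro n
      have : n % 3 = 0 ∨ n % 3 = 1 ∨ n % 3 = 2 := by omega
      rcases this with h | h | h <;> simp [h]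
    have hexr : ∃ r, ¬ Summable (fun n => if n % 3 = r then w n else 0) := by
      by_contra hall
      push_neg at hall
      exact hNS ((((hall 0).add (hall 1)).add (hall 2)).congr (fun n => (hsplit3 n).symm))
    obtain ⟨r, hr⟩ := hexr
    set g : ℕ → ℝ := fun n => if n % 3 = r then w n else 0 with hg
    have hgnn : ∀ n, 0 ≤ g n := by
      intro n; rw [hg]; dsimp only; split
      · exact hwnn n
      · exact le_refl 0
    set t : ℕ → ℝ := fun n => 1 / (1 + ∑ j ∈ Finset.range n, g j) with ht
    have hWnn : ∀ n, (0:ℝ) ≤ ∑ j ∈ Finset.range n, g j :=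
      fun n => Finset.sum_nonneg fun j _ => hgnn j
    have hWpos : ∀ n, (0:ℝ) < 1 + ∑ j ∈ Finset.range n, g j := fun n => by linarith [hWnn n]
    have htpos : ∀ n, 0 < t n := fun n => div_pos one_pos (hWpos n)
    set s : ℕ → ℂ := fun n =>
      if n % 3 = r then (starRingEnd ℂ) (a n) / (‖a n‖ : ℂ) * ((t n : ℝ) : ℂ) else 0 with hs
    have hsnorm : ∀ m, ‖s m‖ ≤ t m := by
      intro m
      rw [hs]; dsimp only; split
      · rw [norm_mul]
        have h1 : ‖(starRingEnd ℂ) (a m) / ((‖a m‖ : ℝ) : ℂ)‖ ≤ 1 := by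
          rcases eq_or_ne (a m) 0 with h | h
          · simp [h]
          · rw [norm_div, RCLike.norm_conj, Complex.norm_real, Real.norm_eq_abs,
              abs_of_pos (norm_pos_iff.2 h), div_self (norm_ne_zero_iff.2 h)]
        have h2 : ‖((t m : ℝ) : ℂ)‖ = t m := by
          rw [Complex.norm_real, Real.norm_eq_abs, abs_of_pos (htpos m)]
        calc ‖_‖ * ‖_‖ ≤ 1 * ‖((t m : ℝ) : ℂ)‖ :=
              mul_le_mul_of_nonneg_right h1 (norm_nonneg _)
          _ = t m := by rw [one_mul, h2]
      · simp [(htpos m).le]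
    have hxcs : mkX l s ∈ cs0Lam l := by
      show Tendsto (fun m => ∑ n ∈ Finset.range (m + 1), LamT l (mkX l s) n) atTop (𝓝 0)
      have heq : ∀ m, ∑ n ∈ Finset.range (m + 1), LamT l (mkX l s) n = s m := by
        intro m
        calc ∑ n ∈ Finset.range (m + 1), LamT l (mkX l s) n
            = ∑ n ∈ Finset.range (m + 1), DD s n :=
              Finset.sum_congr rfl (fun n _ => LamT_mkX hmono hpos s n)
          _ = s m := sum_DD s m
      rw [funext heq]
      have hWtop : Tendsto (fun n => ∑ j ∈ Finset.range n, g j) atTop atTop :=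
        (not_summable_iff_tendsto_nat_atTop_of_nonneg hgnn).1 hr
      have httends : Tendsto t atTop (𝓝 0) := by
        rw [ht]
        simp only [one_div]
        exact (tendsto_atTop_add_const_left _ 1 hWtop).inv_tendsto_atTop
      exact tendsto_zero_iff_norm_tendsto_zero.2
        (squeeze_zero (fun m => norm_nonneg _) hsnorm httends)
    have hsum := hP _ hxcs
    have hlow : ∀ n, g n * t n ≤ ‖a n * mkX l s n‖ := by
      intro n
      rcases eq_or_ne (n % 3) r with hnr | hnr
      · -- compute mkX
        have e1 : DD s n = s n := by
          rw [DD]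
          split
          · rw [sub_zero]
          · have : s (n - 1) = 0 := by rw [hs]; exact if_neg (by omega)
            rw [this, sub_zero]
        have e2 : (if n = 0 then 0 else (l (n - 1) : ℂ) * DD s (n - 1)) = 0 := by
          split
          · rfl
          · have hD1 : DD s (n - 1) = 0 := by
              rw [DD]
              have hs1 : s (n - 1) = 0 := by rw [hs]; exact if_neg (by omega)
              rw [hs1]
              split
              · simp
              · have : s (n - 1 - 1) = 0 := by rw [hs]; exact if_neg (by omega)
                rw [this]; simp
            rw [hD1, mul_zero]
        have hmk : mkX l s n = (l n : ℂ) * s n / ((dl l n : ℝ) : ℂ) := by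
          rw [mkX, e1, e2, sub_zero]
        rcases eq_or_ne (a n) 0 with ha | ha
        · have : g n = 0 := by rw [hg]; dsimp only; rw [if_pos hnr, hw]; simp [ha]
          rw [this, zero_mul]
          exact norm_nonneg _
        · have hsn : ‖s n‖ = t n := by
            rw [hs]; dsimp only; rw [if_pos hnr, norm_mul, norm_div, RCLike.norm_conj,
              Complex.norm_real, Complex.norm_real, Real.norm_eq_abs, Real.norm_eq_abs,
              abs_of_pos (norm_pos_iff.2 ha), abs_of_pos (htpos n),
              div_self (norm_ne_zero_iff.2 ha), one_mul]
          have : ‖a n * mkX l s n‖ = ‖a n‖ * (l n * t n / dl l n) := by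
            rw [hmk, norm_mul, norm_div, norm_mul, Complex.norm_real, Complex.norm_real,
              Real.norm_eq_abs, Real.norm_eq_abs, abs_of_pos (hl n), abs_of_pos (hdl n), hsn]
          rw [this, hg]; dsimp only; rw [if_pos hnr, hw]
          exact le_of_eq (by field_simp)
      · have : g n = 0 := by rw [hg]; exact if_neg hnr
        rw [this, zero_mul]
        exact norm_nonneg _
    have hSle : Summable (fun n => g n * t n) :=
      Summable.of_nonneg_of_le (fun n => mul_nonneg (hgnn n) (htpos n).le) hlow hsum
    have : Summable (fun n => g n / (1 + ∑ j ∈ Finset.range n, g j)) := by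
      apply hSle.congr
      intro n
      rw [ht]; dsimp only; rw [mul_one_div]
    exact div_cumsum_not_summable hgnn hr this
  exact ⟨⟨fun p => h3 (h2 p), fun rr => h1 (h5 (h4 rr))⟩,
    ⟨fun p => h3 (h2 (h1 p)), fun rr => h5 (h4 rr)⟩⟩
end
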